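/- Let {σ'_k} be an orthogonal basis of traceless Hermitian N×N matrices (tr(σ'_iσ'_j) = 2δ_ij) and let V = Σ_k v_k σ'_k ⊗ τ'_k with v_k ≥ 0, where τ'_k are orthonormal-type traceless Hermitian M×M matrices. If tr_B[V, σ'_l ⊗ τ'_m] = 0 for all l, m, then V = 0. -/

import Mathlib

open Matrix Kronecker Complex BigOperators

/-- Partial trace over the second (B) factor. -/
noncomputable def ptraceB {m n : Type*} [Fintype n] (C : Matrix (m × n) (m × n) ℂ) :
    Matrix m m ℂ :=
  fun i j => ∑ k, C (i, k) (j, k)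

/-- Partial trace over the first (A) factor. -/
noncomputable def ptraceA {m n : Type*} [Fintype m] (C : Matrix (m × n) (m × n) ℂ) :
    Matrix n n ℂ :=
  fun i j => ∑ k, C (k, i) (k, j)

lemma ptraceB_kron {m n : Type*} [Fintype n] (A : Matrix m m ℂ) (B : Matrix n n ℂ) :
    ptraceB (A ⊗ₖ B) = B.trace • A := by
  ext i j
  simp only [ptraceB, Matrix.kroneckerMap_apply, Matrix.smul_apply, Matrix.trace, Matrix.diag,
    smul_eq_mul]
  rw [Finset.sum_mul]
  exact Finset.sum_congr rfl fun x _ => mul_comm _ _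

lemma ptraceB_sum {m n ι : Type*} [Fintype n] (s : Finset ι)
    (f : ι → Matrix (m × n) (m × n) ℂ) :
    ptraceB (∑ i ∈ s, f i) = ∑ i ∈ s, ptraceB (f i) := by
  ext a b
  simp only [ptraceB, Matrix.sum_apply]
  exact Finset.sum_comm

lemma ptraceB_smul {m n : Type*} [Fintype n] (c : ℂ) (A : Matrix (m × n) (m × n) ℂ) :
    ptraceB (c • A) = c • ptraceB A := by
  ext a b
  simp [ptraceB, Finset.mul_sum]

lemma ptraceB_sub {m n : Type*} [Fintype n] (A B : Matrix (m × n) (m × n) ℂ) :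
    ptraceB (A - B) = ptraceB A - ptraceB B := by
  ext a b
  simp [ptraceB, Finset.sum_sub_distrib]

lemma sigma_no_commute {N : ℕ} (hN : 2 ≤ N) (σ : Fin (N ^ 2 - 1) → Matrix (Fin N) (Fin N) ℂ)
    (hσt : ∀ i, (σ i).trace = 0)
    (hσo : ∀ i j, (σ i * σ j).trace = if i = j then 2 else 0)
    (k : Fin (N ^ 2 - 1)) (hc : ∀ l, σ k * σ l = σ l * σ k) : False := by
  have hN0 : (N : ℂ) ≠ 0 := by exact_mod_cast (by omega : N ≠ 0)
  set f : Option (Fin (N ^ 2 - 1)) → Matrix (Fin N) (Fin N) ℂ :=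
    fun o => o.elim 1 σ with hf
  have hli : LinearIndependent ℂ f := by
    rw [Fintype.linearIndependent_iff]
    intro g hg
    have htr : ∀ B : Matrix (Fin N) (Fin N) ℂ,
        ((∑ i, g i • f i) * B).trace = ∑ i, g i * (f i * B).trace := by
      intro B
      rw [Finset.sum_mul, Matrix.trace_sum]
      simp [Matrix.smul_mul, Matrix.trace_smul, smul_eq_mul]
    have h1 : ∀ j, g (some j) = 0 := by
      intro j
      have := htr (σ j)
      rw [hg, Matrix.zero_mul, Matrix.trace_zero] at this
      rw [Fintype.sum_option] at this
      simp only [hf, Option.elim, Matrix.one_mul, hσt, mul_zero, zero_add, hσo] at this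
      simp only [mul_ite, mul_zero, Finset.sum_ite_eq', Finset.mem_univ, if_true] at this
      rcases mul_eq_zero.mp this.symm with h | h
      · exact h
      · norm_num at h
    have h0 : g none = 0 := by
      have := congrArg Matrix.trace hg
      rw [Matrix.trace_sum, Matrix.trace_zero, Fintype.sum_option] at this
      simp only [hf, Option.elim, Matrix.trace_smul, hσt, smul_eq_mul, mul_zero,
        Finset.sum_const_zero, add_zero, Matrix.trace_one, Fintype.card_fin] at this
      exact (mul_eq_zero.mp this).resolve_right hN0
    intro i
    cases i with
    | none => exact h0
    | some j => exact h1 j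
  have hcard : Fintype.card (Option (Fin (N ^ 2 - 1))) =
      Module.finrank ℂ (Matrix (Fin N) (Fin N) ℂ) := by
    rw [Module.finrank_matrix]
    simp only [Fintype.card_option, Fintype.card_fin, Module.finrank_self, mul_one]
    have h1 : 1 ≤ N ^ 2 := by nlinarith
    have h2 : N ^ 2 = N * N := sq N
    omega
  have hspan := hli.span_eq_top_of_card_eq_finrank hcard
  set S : Submodule ℂ (Matrix (Fin N) (Fin N) ℂ) :=
    { carrier := {B | σ k * B = B * σ k}
      add_mem' := fun {a b} ha hb => by
        simp only [Set.mem_setOf_eq] at *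
        rw [Matrix.mul_add, Matrix.add_mul, ha, hb]
      zero_mem' := by simp
      smul_mem' := fun c {x} hx => by
        simp only [Set.mem_setOf_eq] at *
        rw [Matrix.mul_smul, Matrix.smul_mul, hx] } with hS
  have hall : ∀ B : Matrix (Fin N) (Fin N) ℂ, σ k * B = B * σ k := by
    intro B
    have hsub : Set.range f ⊆ S := by
      rintro x ⟨o, rfl⟩
      cases o with
      | none => show σ k * 1 = 1 * σ k; simp
      | some j => exact hc j
    have : Submodule.span ℂ (Set.range f) ≤ S := Submodule.span_le.mpr hsub
    rw [hspan] at this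
    exact this (Submodule.mem_top)
  obtain ⟨c, hcs⟩ := Matrix.mem_range_scalar_of_commute_single
    (M := σ k) (fun i j _ => (hall _).symm)
  have htrace : (σ k).trace = (N : ℂ) * c := by
    rw [← hcs]
    simp [Matrix.scalar, Matrix.trace_diagonal, Finset.sum_const, mul_comm]
  have hc0 : c = 0 := by
    rw [hσt k] at htrace
    exact (mul_eq_zero.mp htrace.symm).resolve_left hN0
  have hzero : σ k = 0 := by
    rw [← hcs, hc0]
    simp
  have := hσo k k
  rw [hzero] at this
  simp at this

theorem diagonal_interaction_vanishes {N M : ℕ} (hN : 2 ≤ N) (hM : 2 ≤ M)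
    (σ : Fin (N ^ 2 - 1) → Matrix (Fin N) (Fin N) ℂ)
    (τ : Fin (M ^ 2 - 1) → Matrix (Fin M) (Fin M) ℂ)
    (hσh : ∀ i, (σ i).IsHermitian) (hσt : ∀ i, (σ i).trace = 0)
    (hσo : ∀ i j, (σ i * σ j).trace = if i = j then 2 else 0)
    (hτh : ∀ k, (τ k).IsHermitian) (hτt : ∀ k, (τ k).trace = 0)
    (hτo : ∀ k l, (τ k * τ l).trace = if k = l then 2 else 0)
    (v : Fin (min N M ^ 2 - 1) → ℝ) (hv : ∀ k, 0 ≤ v k)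
    (h : ∀ (l : Fin (N ^ 2 - 1)) (m : Fin (M ^ 2 - 1)),
      ptraceB ⁅∑ k, (v k : ℂ) •
          (σ (Fin.castLE (Nat.sub_le_sub_right (Nat.pow_le_pow_left (min_le_left N M) 2) 1) k) ⊗ₖ
           τ (Fin.castLE (Nat.sub_le_sub_right (Nat.pow_le_pow_left (min_le_right N M) 2) 1) k)),
        σ l ⊗ₖ τ m⁆ = 0) :
    ∑ k, (v k : ℂ) •
        (σ (Fin.castLE (Nat.sub_le_sub_right (Nat.pow_le_pow_left (min_le_left N M) 2) 1) k) ⊗ₖ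
         τ (Fin.castLE (Nat.sub_le_sub_right (Nat.pow_le_pow_left (min_le_right N M) 2) 1) k)) = 0 := by
  set cN : Fin (min N M ^ 2 - 1) → Fin (N ^ 2 - 1) :=
    Fin.castLE (Nat.sub_le_sub_right (Nat.pow_le_pow_left (min_le_left N M) 2) 1) with hcN
  set cM : Fin (min N M ^ 2 - 1) → Fin (M ^ 2 - 1) :=
    Fin.castLE (Nat.sub_le_sub_right (Nat.pow_le_pow_left (min_le_right N M) 2) 1) with hcM
  suffices hvz : ∀ k, v k = 0 by
    simp [hvz]
  intro k₀
  by_contra hne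
  -- expand the partial trace of the bracket
  have hE : ∀ (l : Fin (N ^ 2 - 1)) (m : Fin (M ^ 2 - 1)),
      ptraceB ⁅∑ k, (v k : ℂ) • (σ (cN k) ⊗ₖ τ (cM k)), σ l ⊗ₖ τ m⁆ =
      ∑ k, (v k : ℂ) • ((τ (cM k) * τ m).trace • (σ (cN k) * σ l) -
        (τ m * τ (cM k)).trace • (σ l * σ (cN k))) := by
    intro l m
    rw [Ring.lie_def, Finset.sum_mul, Finset.mul_sum, ← Finset.sum_sub_distrib, ptraceB_sum]
    refine Finset.sum_congr rfl fun k _ => ?_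
    rw [smul_mul_assoc, mul_smul_comm, ← smul_sub, ptraceB_smul,
      ← Matrix.mul_kronecker_mul, ← Matrix.mul_kronecker_mul, ptraceB_sub,
      ptraceB_kron, ptraceB_kron]
  have key : ∀ l, ((v k₀ : ℂ) * 2) • (σ (cN k₀) * σ l - σ l * σ (cN k₀)) = 0 := by
    intro l
    have hh := (hE l (cM k₀)).symm.trans (h l (cM k₀))
    rw [Finset.sum_eq_single k₀ ?_ ?_] at hh
    · rw [hτo, if_pos rfl] at hh
      rw [← smul_sub, smul_smul] at hh
      exact hh
    · intro b _ hb
      rw [hτo, hτo, if_neg, if_neg]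
      · simp
      · exact fun he => hb (Fin.castLE_inj.mp he.symm)
      · exact fun he => hb (Fin.castLE_inj.mp he)
    · intro habs
      exact absurd (Finset.mem_univ _) habs
  have hcomm : ∀ l, σ (cN k₀) * σ l = σ l * σ (cN k₀) := by
    intro l
    have hnz : ((v k₀ : ℂ) * 2) ≠ 0 := by
      simp only [ne_eq, mul_eq_zero, not_or]
      exact ⟨by exact_mod_cast hne, by norm_num⟩
    have := (smul_eq_zero.mp (key l)).resolve_left hnz
    exact sub_eq_zero.mp this
  exact sigma_no_commute hN σ hσt hσo (cN k₀) hcomm
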